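/- Let m be holomorphic and bounded by M on the open cone Γ_θ = {z ≠ 0 : |arg z| < θ}, and let 0 < ψ < θ. Define m_ψ(x) = m(xe^{iψ}) for x > 0 and m_ψ(x) = m(|x|e^{−iψ}) for x < 0. Then m_ψ satisfies |m_ψ(x)| ≤ M and |x · d/dx m_ψ(x)| ≤ M / sin(θ − ψ) for all x ≠ 0. -/

import Mathlib

open Real Complex Set Metric

private lemma argA {δ : ℝ} (hδ : 0 < δ) {v : ℂ} (hv : ‖v - 1‖ < Real.sin δ) :
    |Complex.arg v| < δ := by
  have hs1 : Real.sin δ ≤ 1 := Real.sin_le_one δ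
  have hre1 : |v.re - 1| ≤ ‖v - 1‖ := by
    simpa using Complex.abs_re_le_norm (v - 1)
  have him : |v.im| ≤ ‖v - 1‖ := by
    simpa using Complex.abs_im_le_norm (v - 1)
  have hre : 0 < v.re := by
    have h1 := (abs_lt.1 (lt_of_le_of_lt hre1 hv)).1
    linarith
  have harghalf : |Complex.arg v| < π / 2 :=
    Complex.abs_arg_lt_pi_div_two_iff.2 (Or.inl hre)
  rcases le_or_gt (π / 2) δ with h | h
  · linarith
  · have hc : 0 < Real.cos δ := Real.cos_pos_of_mem_Ioo ⟨by linarith, h⟩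
    have hs : 0 < Real.sin δ := lt_of_le_of_lt (norm_nonneg _) hv
    have hab : v.im ^ 2 + (v.re - 1) ^ 2 < Real.sin δ ^ 2 := by
      have h2 : ‖v - 1‖ ^ 2 < Real.sin δ ^ 2 := by
        nlinarith [norm_nonneg (v - 1)]
      have h3 : ‖v - 1‖ ^ 2 = (v.re - 1) ^ 2 + v.im ^ 2 := by
        rw [Complex.sq_norm, Complex.normSq_apply]
        simp [Complex.sub_re, Complex.sub_im]
        ring
      linarith
    have hpyth := Real.sin_sq_add_cos_sq δ
    have key : |v.im| * Real.cos δ < Real.sin δ * v.re := by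
      nlinarith [sq_nonneg (|v.im| * Real.sin δ + (v.re - 1) * Real.cos δ),
        abs_nonneg v.im, _root_.sq_abs v.im]
    have hv0 : v ≠ 0 := fun h => by simp [h] at hre
    have habs : 0 < ‖v‖ := norm_pos_iff.mpr hv0
    have him2 : |v.im| < ‖v‖ * Real.sin δ := by
      have hsq : |v.im| ^ 2 < (‖v‖ * Real.sin δ) ^ 2 := by
        have hvsq : ‖v‖ ^ 2 = v.re ^ 2 + v.im ^ 2 := by
          rw [Complex.sq_norm, Complex.normSq_apply]; ring
        nlinarith [mul_nonneg (abs_nonneg v.im) hc.le, _root_.sq_abs v.im]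
      exact lt_of_pow_lt_pow_left₀ 2 (mul_nonneg habs.le hs.le) hsq
    have hsin : |Real.sin (Complex.arg v)| < Real.sin δ := by
      rw [Complex.sin_arg, abs_div, abs_of_pos habs, div_lt_iff₀ habs]
      linarith [him2]
    by_contra hcon
    push_neg at hcon
    have hmono : Real.sin δ ≤ Real.sin |Complex.arg v| :=
      Real.strictMonoOn_sin.monotoneOn ⟨by linarith, h.le⟩
        ⟨by linarith [abs_nonneg (Complex.arg v)], harghalf.le⟩ hcon
    have habs_sin : Real.sin |Complex.arg v| ≤ |Real.sin (Complex.arg v)| := by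
      rcases abs_cases (Complex.arg v) with ⟨h1, _⟩ | ⟨h1, _⟩
      · rw [h1]; exact le_abs_self _
      · rw [h1, Real.sin_neg]; exact neg_le_abs _
    linarith

open Real Complex Set Metric in
lemma ballB {θ ψ : ℝ} (hψ0 : 0 ≤ ψ) (hψθ : ψ < θ) (hθ : θ ≤ π) {z₀ : ℂ} (hz : z₀ ≠ 0)
    (harg : |Complex.arg z₀| ≤ ψ) :
    Metric.ball z₀ (Real.sin (θ - ψ) * ‖z₀‖) ⊆
      {z : ℂ | z ≠ 0 ∧ |Complex.arg z| < θ} := by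
  intro w hw
  have habs : 0 < ‖z₀‖ := norm_pos_iff.mpr hz
  rw [Metric.mem_ball, Complex.dist_eq] at hw
  set v := w / z₀ with hvdef
  have hveq : v - 1 = (w - z₀) / z₀ := by rw [hvdef]; field_simp
  have hv : ‖v - 1‖ < Real.sin (θ - ψ) := by
    rw [hveq, norm_div, div_lt_iff₀ habs]
    linarith
  have hargv := argA (by linarith : (0:ℝ) < θ - ψ) hv
  have hv0 : v ≠ 0 := by
    intro h
    rw [h] at hv
    simp at hv
    linarith [Real.sin_le_one (θ - ψ)]
  have hw0 : w ≠ 0 := by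
    intro h
    apply hv0
    rw [hvdef, h, zero_div]
  have hwv : w = z₀ * v := by
    rw [hvdef, mul_div_cancel₀ _ hz]
  refine ⟨hw0, ?_⟩
  have h1 := abs_le.1 harg
  have h2 := abs_lt.1 hargv
  have hmem : Complex.arg z₀ + Complex.arg v ∈ Set.Ioc (-π) π := by
    constructor <;> [linarith; linarith]
  have : Complex.arg w = Complex.arg z₀ + Complex.arg v := by
    rw [hwv]; exact Complex.arg_mul hz hv0 hmem
  rw [this]
  calc |Complex.arg z₀ + Complex.arg v| ≤ |Complex.arg z₀| + |Complex.arg v| := abs_add_le _ _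
    _ < θ := by linarith

open Set Metric in
lemma derivBound {M r : ℝ} {m : ℂ → ℂ} {z₀ : ℂ} {S : Set ℂ} (hr : 0 < r)
    (hsub : Metric.ball z₀ r ⊆ S) (hm : DifferentiableOn ℂ m S)
    (hbd : ∀ z ∈ S, ‖m z‖ ≤ M) :
    ‖deriv m z₀‖ ≤ M / r := by
  have key : ∀ r' ∈ Set.Ioo 0 r, ‖deriv m z₀‖ ≤ M / r' := by
    rintro r' ⟨h0, hlt⟩
    refine Complex.norm_deriv_le_of_forall_mem_sphere_norm_le h0 ?_ ?_
    · refine DifferentiableOn.diffContOnCl ?_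
      rw [closure_ball _ h0.ne']
      exact hm.mono ((closedBall_subset_ball hlt).trans hsub)
    · intro z hz
      exact hbd z (hsub (closedBall_subset_ball hlt (sphere_subset_closedBall hz)))
  have hmul : ‖deriv m z₀‖ * r ≤ M := by
    have htend : Filter.Tendsto (fun t : ℝ => ‖deriv m z₀‖ * t) (nhdsWithin r (Set.Iio r))
        (nhds (‖deriv m z₀‖ * r)) :=
      (continuous_const.mul continuous_id).continuousAt.tendsto.mono_left nhdsWithin_le_nhds
    refine le_of_tendsto htend ?_
    filter_upwards [Ioo_mem_nhdsLT_of_mem ⟨half_lt_self hr, le_rfl⟩] with y hy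
    have h0 : 0 < y := lt_trans (half_pos hr) hy.1
    exact (le_div_iff₀ h0).1 (key y ⟨h0, hy.2⟩)
  exact (le_div_iff₀ hr).2 hmul

/-- Let `m` be holomorphic and bounded by `M` on the open cone
`Γ_θ = {z ≠ 0 : |arg z| < θ}`, `0 < ψ < θ ≤ π`.  The boundary-type function
`m_ψ(x) = m(xe^{iψ})` for `x > 0`, `m(|x|e^{-iψ})` for `x < 0`, satisfies
`|m_ψ(x)| ≤ M` and `|x · m_ψ'(x)| ≤ M / sin(θ - ψ)` for all `x ≠ 0`. -/

theorem cone_boundary_mihlin_estimate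
    (θ ψ M : ℝ) (hψ : 0 < ψ) (hψθ : ψ < θ) (hθ : θ ≤ Real.pi)
    (m : ℂ → ℂ)
    (hm : DifferentiableOn ℂ m {z : ℂ | z ≠ 0 ∧ |Complex.arg z| < θ})
    (hbd : ∀ z ∈ {z : ℂ | z ≠ 0 ∧ |Complex.arg z| < θ}, ‖m z‖ ≤ M)
    (x : ℝ) (hx : x ≠ 0) :
    ‖m (((|x| : ℝ) : ℂ) *
        Complex.exp (((Real.sign x * ψ : ℝ) : ℂ) * Complex.I))‖ ≤ M ∧
      |x| * ‖
          (deriv (fun y : ℝ => m (((|y| : ℝ) : ℂ) *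
            Complex.exp (((Real.sign y * ψ : ℝ) : ℂ) * Complex.I))) x)‖
        ≤ M / Real.sin (θ - ψ) := by
  have hx' : 0 < |x| := abs_pos.2 hx
  have hψπ : ψ < Real.pi := lt_of_lt_of_le hψθ hθ
  set t : ℝ := Real.sign x * ψ with htdef
  set z₀ : ℂ := ((|x| : ℝ) : ℂ) * Complex.exp ((t : ℂ) * Complex.I) with hz₀def
  have hsign : Real.sign x = 1 ∨ Real.sign x = -1 := by
    rcases hx.lt_or_gt with h | h
    · right; exact Real.sign_of_neg h
    · left; exact Real.sign_of_pos h
  have ht : |t| = ψ := by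
    rcases hsign with h | h <;> rw [htdef, h] <;> simp [abs_of_pos hψ]
  have htIoc : t ∈ Set.Ioc (-Real.pi) Real.pi := by
    have h1 := abs_le.1 ht.le
    exact ⟨by linarith, by linarith⟩
  have hargz₀ : Complex.arg z₀ = t := by
    rw [hz₀def, Complex.exp_mul_I]
    exact Complex.arg_mul_cos_add_sin_mul_I hx' htIoc
  have hz₀0 : z₀ ≠ 0 := by
    apply mul_ne_zero
    · exact_mod_cast hx'.ne'
    · exact Complex.exp_ne_zero _
  have habsz₀ : ‖z₀‖ = |x| := by
    rw [hz₀def, norm_mul, Complex.norm_exp]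
    simp
  have hmem : z₀ ∈ {z : ℂ | z ≠ 0 ∧ |Complex.arg z| < θ} :=
    ⟨hz₀0, by rw [hargz₀, ht]; exact hψθ⟩
  refine ⟨hbd z₀ hmem, ?_⟩
  -- the derivative bound
  set r : ℝ := Real.sin (θ - ψ) * |x| with hrdef
  have hsinpos : 0 < Real.sin (θ - ψ) :=
    Real.sin_pos_of_pos_of_lt_pi (by linarith) (by linarith)
  have hr : 0 < r := mul_pos hsinpos hx'
  have hsub : Metric.ball z₀ r ⊆ {z : ℂ | z ≠ 0 ∧ |Complex.arg z| < θ} := by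
    have := ballB hψ.le hψθ hθ hz₀0 (le_of_eq (by rw [hargz₀, ht]))
    rwa [habsz₀] at this
  have hd : ‖deriv m z₀‖ ≤ M / r := derivBound hr hsub hm hbd
  set c : ℂ := ((Real.sign x : ℝ) : ℂ) * Complex.exp ((t : ℂ) * Complex.I) with hcdef
  have hcx : c * (x : ℂ) = z₀ := by
    rw [hcdef, hz₀def]
    have : ((Real.sign x : ℝ) : ℂ) * (x : ℂ) = ((|x| : ℝ) : ℂ) := by
      rcases hx.lt_or_gt with h | h
      · rw [Real.sign_of_neg h, abs_of_neg h]; push_cast; ring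
      · rw [Real.sign_of_pos h, abs_of_pos h]; push_cast; ring
    rw [mul_right_comm, this]
  have habsc : ‖c‖ = 1 := by
    rw [hcdef, norm_mul, Complex.norm_exp]
    rcases hsign with h | h <;> rw [h] <;> simp
  have hmdiff : HasDerivAt m (deriv m z₀) z₀ :=
    ((hm.mono hsub).differentiableAt
      (Metric.isOpen_ball.mem_nhds (Metric.mem_ball_self hr))).hasDerivAt
  have hF : HasDerivAt (fun y : ℝ => m (c * (y : ℂ))) (deriv m z₀ * c) x := by
    have h2 : HasDerivAt (fun w : ℂ => c * w) c (x : ℂ) := by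
      simpa using (hasDerivAt_id (x : ℂ)).const_mul c
    have h1 : HasDerivAt (fun w : ℂ => m (c * w)) (deriv m z₀ * c) (x : ℂ) := by
      have hm2 : HasDerivAt m (deriv m z₀) (c * (x : ℂ)) := by rw [hcx]; exact hmdiff
      have := HasDerivAt.comp (x : ℂ) hm2 h2
      exact this
    exact h1.comp_ofReal
  have hev : (fun y : ℝ => m (((|y| : ℝ) : ℂ) *
      Complex.exp (((Real.sign y * ψ : ℝ) : ℂ) * Complex.I)))
      =ᶠ[nhds x] fun y : ℝ => m (c * (y : ℂ)) := by
    rcases hx.lt_or_gt with hneg | hpos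
    · filter_upwards [Iio_mem_nhds hneg] with y hy
      have : ((|y| : ℝ) : ℂ) * Complex.exp (((Real.sign y * ψ : ℝ) : ℂ) * Complex.I)
          = c * (y : ℂ) := by
        rw [Real.sign_of_neg hy, abs_of_neg hy, hcdef, htdef, Real.sign_of_neg hneg]
        push_cast
        ring
      rw [this]
    · filter_upwards [Ioi_mem_nhds hpos] with y hy
      have : ((|y| : ℝ) : ℂ) * Complex.exp (((Real.sign y * ψ : ℝ) : ℂ) * Complex.I)
          = c * (y : ℂ) := by
        rw [Real.sign_of_pos hy, abs_of_pos hy, hcdef, htdef, Real.sign_of_pos hpos]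
        push_cast
        ring
      rw [this]
  have hderiv : deriv (fun y : ℝ => m (((|y| : ℝ) : ℂ) *
      Complex.exp (((Real.sign y * ψ : ℝ) : ℂ) * Complex.I))) x = deriv m z₀ * c := by
    rw [Filter.EventuallyEq.deriv_eq hev]
    exact hF.deriv
  rw [hderiv, norm_mul, habsc, mul_one]
  calc |x| * ‖deriv m z₀‖ ≤ |x| * (M / r) :=
        mul_le_mul_of_nonneg_left hd (abs_nonneg x)
    _ = M / Real.sin (θ - ψ) := by
        rw [hrdef]
        field_simp
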